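/- In a 2-agent 2×2 general-sum game with u_r u_c > 0 in which neither center coordinate α^c = −b_c/u_c nor β^c = −b_r/u_r lies in the valid probability range [0,1], if both agents follow GA-SPP with γ₀ and η satisfying Conditions 1–3, then from any initial strategy pair the sequence (α_k,β_k) converges to a Nash equilibrium. -/

import Mathlib

/- Framework for 2-agent 2×2 general-sum games with scalar strategies
   α, β ∈ [0,1] (the probability of the first action). -/

open Filter Topology

noncomputable section

/-- Projection of a real number onto [0, 1] (clamping). -/
def clamp (x : ℝ) : ℝ := max 0 (min 1 x)

/-- Row player's expected payoff. -/
def Vr2 (R : Matrix (Fin 2) (Fin 2) ℝ) (α β : ℝ) : ℝ :=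
  R 0 0 * (α * β) + R 0 1 * (α * (1 - β)) +
  R 1 0 * ((1 - α) * β) + R 1 1 * ((1 - α) * (1 - β))

/-- Column player's expected payoff. -/
def Vc2 (C : Matrix (Fin 2) (Fin 2) ℝ) (α β : ℝ) : ℝ :=
  C 0 0 * (α * β) + C 0 1 * (α * (1 - β)) +
  C 1 0 * ((1 - α) * β) + C 1 1 * ((1 - α) * (1 - β))

def ur2 (R : Matrix (Fin 2) (Fin 2) ℝ) : ℝ := R 0 0 + R 1 1 - R 0 1 - R 1 0
def br2 (R : Matrix (Fin 2) (Fin 2) ℝ) : ℝ := R 0 1 - R 1 1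
def uc2 (C : Matrix (Fin 2) (Fin 2) ℝ) : ℝ := C 0 0 + C 1 1 - C 0 1 - C 1 0
def bc2 (C : Matrix (Fin 2) (Fin 2) ℝ) : ℝ := C 1 0 - C 1 1

/-- ∂_α V_r(α, β) = u_r β + b_r. -/
def dVr2 (R : Matrix (Fin 2) (Fin 2) ℝ) (β : ℝ) : ℝ := ur2 R * β + br2 R

/-- ∂_β V_c(α, β) = u_c α + b_c. -/
def dVc2 (C : Matrix (Fin 2) (Fin 2) ℝ) (α : ℝ) : ℝ := uc2 C * α + bc2 C

/-- (α, β) is a Nash equilibrium of the 2×2 game. -/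
def IsNash2 (R C : Matrix (Fin 2) (Fin 2) ℝ) (α β : ℝ) : Prop :=
  α ∈ Set.Icc (0 : ℝ) 1 ∧ β ∈ Set.Icc (0 : ℝ) 1 ∧
  (∀ α' ∈ Set.Icc (0 : ℝ) 1, Vr2 R α' β ≤ Vr2 R α β) ∧
  (∀ β' ∈ Set.Icc (0 : ℝ) 1, Vc2 C α β' ≤ Vc2 C α β)

/-- δ = max entry − min entry of a 2×2 payoff matrix. -/
def spread2 (M : Matrix (Fin 2) (Fin 2) ℝ) : ℝ :=
  (Finset.univ.sup' Finset.univ_nonempty fun p : Fin 2 × Fin 2 => M p.1 p.2)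
  - (Finset.univ.inf' Finset.univ_nonempty fun p : Fin 2 × Fin 2 => M p.1 p.2)

/-- Conditions 1–3 on the initial prediction length γ₀ and the step size η. -/
def Conds2 (R C : Matrix (Fin 2) (Fin 2) ℝ) (γ₀ η : ℝ) : Prop :=
  0 < γ₀ ∧ 0 < η ∧
  4 * γ₀ ^ 2 * spread2 R * spread2 C < 1 ∧
  η < 1 / (spread2 R + spread2 C) ∧ γ₀ < 1 / (spread2 R + spread2 C)

/-- Both agents follow GA-SPP in the 2×2 game: `a`,`b` are the strategies,
`abar`,`bbar` the predictions, `γ` the prediction lengths, `η` the step size. -/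
def GASPP2Run (R C : Matrix (Fin 2) (Fin 2) ℝ) (η : ℝ)
    (γ a b abar bbar : ℕ → ℝ) : Prop :=
  ∀ k : ℕ,
    abar (k + 1) = clamp (a k + γ k * dVr2 R (b k)) ∧
    bbar (k + 1) = clamp (b k + γ k * dVc2 C (a k)) ∧
    ((abar (k + 1) = a k ∧ bbar (k + 1) = b k) →
        a (k + 1) = a k ∧ b (k + 1) = b k ∧ γ (k + 1) = γ k) ∧
    (¬(abar (k + 1) = a k ∧ bbar (k + 1) = b k) →
        a (k + 1) = clamp (a k + η * dVr2 R (bbar (k + 1))) ∧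
        b (k + 1) = clamp (b k + η * dVc2 C (abar (k + 1))) ∧
        ((a (k + 1) = a k ∧ b (k + 1) = b k) →
            ∃ μ : ℝ, 0 < μ ∧ μ < 1 ∧ γ (k + 1) = μ * γ k) ∧
        (¬(a (k + 1) = a k ∧ b (k + 1) = b k) → γ (k + 1) = γ k))

/-- The row agent follows GA-SPP while the column agent follows basic
gradient ascent (GA), based on the opponent's current strategy. -/
def GASPP2vsGARun (R C : Matrix (Fin 2) (Fin 2) ℝ) (η : ℝ)
    (γ a b abar bbar : ℕ → ℝ) : Prop :=
  ∀ k : ℕ,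
    abar (k + 1) = clamp (a k + γ k * dVr2 R (b k)) ∧
    bbar (k + 1) = clamp (b k + γ k * dVc2 C (a k)) ∧
    ((abar (k + 1) = a k ∧ bbar (k + 1) = b k) →
        a (k + 1) = a k ∧ b (k + 1) = b k ∧ γ (k + 1) = γ k) ∧
    (¬(abar (k + 1) = a k ∧ bbar (k + 1) = b k) →
        a (k + 1) = clamp (a k + η * dVr2 R (bbar (k + 1))) ∧
        b (k + 1) = clamp (b k + η * dVc2 C (a k)) ∧
        ((a (k + 1) = a k ∧ b (k + 1) = b k) →
            ∃ μ : ℝ, 0 < μ ∧ μ < 1 ∧ γ (k + 1) = μ * γ k) ∧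
        (¬(a (k + 1) = a k ∧ b (k + 1) = b k) → γ (k + 1) = γ k))

end

lemma clamp_mem (x : ℝ) : 0 ≤ clamp x ∧ clamp x ≤ 1 :=
  ⟨le_max_left _ _, max_le (by norm_num) (min_le_left _ _)⟩

lemma clamp_step (a c m s : ℝ) (ha0 : 0 ≤ a) (ha1 : a ≤ 1) (_hm : 0 < m)
    (hs : s = 1 ∨ s = -1) (hc : m ≤ s * c) :
    |clamp (a + c) - (s + 1) / 2| ≤ max 0 (|a - (s + 1) / 2| - m) := by
  have h0 : 0 ≤ clamp (a + c) := le_max_left _ _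
  have h1 : clamp (a + c) ≤ 1 := max_le (by norm_num) (min_le_left _ _)
  rcases hs with rfl | rfl
  · rw [show ((1:ℝ)+1)/2 = 1 by norm_num]
    rw [abs_of_nonpos (by linarith), abs_of_nonpos (by linarith)]
    rcases le_total (a + c) 1 with h | h
    · have h3 : a + c ≤ clamp (a + c) := by rw [clamp, min_eq_right h]; exact le_max_right _ _
      refine le_trans ?_ (le_max_right _ _); linarith
    · have h3 : clamp (a + c) = 1 := by rw [clamp, min_eq_left h]; norm_num
      refine le_trans ?_ (le_max_left _ _); linarith
  · rw [show ((-1:ℝ)+1)/2 = 0 by norm_num, sub_zero, sub_zero]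
    rw [abs_of_nonneg h0, abs_of_nonneg ha0]
    rcases le_total (a + c) 0 with h | h
    · have h3 : clamp (a + c) = 0 := by
        rw [clamp, min_eq_right (by linarith : a + c ≤ 1)]; exact max_eq_left h
      refine le_trans ?_ (le_max_left _ _); linarith
    · have h3 : clamp (a + c) ≤ a + c := max_le h (min_le_right _ _)
      refine le_trans ?_ (le_max_right _ _); linarith

lemma sign_lemma (u b : ℝ) (hu : u ≠ 0) (h : -b / u ∉ Set.Icc (0:ℝ) 1) :
    ∃ s : ℝ, (s = 1 ∨ s = -1) ∧ 0 < s * b ∧ 0 < s * (u + b) := by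
  have ht : u * (-b / u) = -b := by field_simp
  have h' : -b / u < 0 ∨ 1 < -b / u := by
    by_contra hcon
    push_neg at hcon
    exact h (Set.mem_Icc.mpr ⟨hcon.1, hcon.2⟩)
  rcases lt_or_gt_of_ne hu with hun | hup
  · rcases h' with h' | h'
    · have hb : 0 < -b := by rw [← ht]; exact mul_pos_of_neg_of_neg hun h'
      exact ⟨-1, Or.inr rfl, by linarith, by nlinarith⟩
    · have := mul_lt_mul_of_neg_left h' hun
      rw [mul_one, ht] at this
      exact ⟨1, Or.inl rfl, by linarith, by linarith⟩
  · rcases h' with h' | h'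
    · have hb : u * (-b/u) < 0 := mul_neg_of_pos_of_neg hup h'
      rw [ht] at hb
      exact ⟨1, Or.inl rfl, by linarith, by linarith⟩
    · have := (mul_lt_mul_iff_right₀ hup).mpr h'
      rw [mul_one, ht] at this
      exact ⟨-1, Or.inr rfl, by linarith, by linarith⟩

lemma slope_bound (u b s x : ℝ) (hx0 : 0 ≤ x) (hx1 : x ≤ 1)
    (h1 : 0 < s * b) (h2 : 0 < s * (u + b)) :
    min (s * b) (s * (u + b)) ≤ s * (u * x + b) := by
  have A : 0 ≤ (1 - x) * (s * b - min (s * b) (s * (u + b))) :=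
    mul_nonneg (by linarith) (by linarith [min_le_left (s * b) (s * (u + b))])
  have B : 0 ≤ x * (s * (u + b) - min (s * b) (s * (u + b))) :=
    mul_nonneg hx0 (by linarith [min_le_right (s * b) (s * (u + b))])
  nlinarith [A, B]

lemma decay_lemma (d : ℕ → ℝ) (ε : ℝ) (hε : 0 < ε) (h0 : d 0 ≤ 1)
    (hstep : ∀ k, d (k + 1) ≤ max 0 (d k - ε)) :
    ∀ k : ℕ, d k ≤ max 0 (1 - k * ε) := by
  intro k
  induction k with
  | zero => simp only [Nat.cast_zero, zero_mul, sub_zero]; exact le_trans h0 (le_max_right _ _)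
  | succ k ih =>
    have hk : ((k + 1 : ℕ) : ℝ) = (k : ℝ) + 1 := by push_cast; ring
    refine le_trans (hstep k) (max_le (le_max_left _ _) ?_)
    rcases le_total (1 - (k : ℝ) * ε) 0 with h | h
    · have hdk : d k ≤ 0 := le_trans ih (le_of_eq (max_eq_left h))
      refine le_trans ?_ (le_max_left _ _); linarith
    · have hdk : d k ≤ 1 - (k : ℝ) * ε := le_trans ih (le_of_eq (max_eq_right h))
      refine le_trans ?_ (le_max_right _ _); rw [hk]; linarith

lemma Vr2_diff (R : Matrix (Fin 2) (Fin 2) ℝ) (α α' β : ℝ) :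
    Vr2 R α' β - Vr2 R α β = dVr2 R β * (α' - α) := by
  unfold Vr2 dVr2 ur2 br2; ring

lemma Vc2_diff (C : Matrix (Fin 2) (Fin 2) ℝ) (α β β' : ℝ) :
    Vc2 C α β' - Vc2 C α β = dVc2 C α * (β' - β) := by
  unfold Vc2 dVc2 uc2 bc2; ring

lemma dist_zero_of_contract {d ε : ℝ} (hd : 0 ≤ d) (hε : 0 < ε)
    (h : d ≤ max 0 (d - ε)) : d = 0 := by
  rcases le_max_iff.mp h with h' | h'
  · linarith
  · linarith

set_option maxHeartbeats 1000000 in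
/-- Property 3: in a 2×2 game with u_r u_c > 0 in which neither
center coordinate α^c = −b_c/u_c nor β^c = −b_r/u_r lies in [0,1], if both
agents follow GA-SPP (Conditions 1–3), then from any initial strategy pair the
strategies converge to a Nash equilibrium. -/
theorem stmt13 (R C : Matrix (Fin 2) (Fin 2) ℝ)
    (hU : 0 < ur2 R * uc2 C)
    (hαc : -bc2 C / uc2 C ∉ Set.Icc (0 : ℝ) 1)
    (hβc : -br2 R / ur2 R ∉ Set.Icc (0 : ℝ) 1)
    (γ₀ η : ℝ) (hcond : Conds2 R C γ₀ η)
    (γ a b abar bbar : ℕ → ℝ)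
    (hγ₀ : γ 0 = γ₀) (ha₀ : a 0 ∈ Set.Icc (0 : ℝ) 1) (hb₀ : b 0 ∈ Set.Icc (0 : ℝ) 1)
    (hrun : GASPP2Run R C η γ a b abar bbar) :
    ∃ αs βs : ℝ, IsNash2 R C αs βs ∧
      Filter.Tendsto (fun k => (a k, b k)) Filter.atTop (nhds (αs, βs)) := by
  obtain ⟨hγpos, hηpos, -, -, -⟩ := hcond
  have hur : ur2 R ≠ 0 := by
    intro h; rw [h, zero_mul] at hU; exact lt_irrefl 0 hU
  have huc : uc2 C ≠ 0 := by
    intro h; rw [h, mul_zero] at hU; exact lt_irrefl 0 hU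
  obtain ⟨sr, hsr, hbr1, hbr2⟩ := sign_lemma (ur2 R) (br2 R) hur hβc
  obtain ⟨sc, hsc, hbc1, hbc2⟩ := sign_lemma (uc2 C) (bc2 C) huc hαc
  have hmr : 0 < min (sr * br2 R) (sr * (ur2 R + br2 R)) := lt_min hbr1 hbr2
  have hmc : 0 < min (sc * bc2 C) (sc * (uc2 C + bc2 C)) := lt_min hbc1 hbc2
  set mr := min (sr * br2 R) (sr * (ur2 R + br2 R)) with hmr_def
  set mc := min (sc * bc2 C) (sc * (uc2 C + bc2 C)) with hmc_def
  have hdr : ∀ x : ℝ, 0 ≤ x → x ≤ 1 → mr ≤ sr * dVr2 R x := by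
    intro x h0 h1
    have := slope_bound (ur2 R) (br2 R) sr x h0 h1 hbr1 hbr2
    rw [dVr2]; exact this
  have hdc : ∀ x : ℝ, 0 ≤ x → x ≤ 1 → mc ≤ sc * dVc2 C x := by
    intro x h0 h1
    have := slope_bound (uc2 C) (bc2 C) sc x h0 h1 hbc1 hbc2
    rw [dVc2]; exact this
  -- invariants
  have inv : ∀ k, (0 ≤ a k ∧ a k ≤ 1) ∧ (0 ≤ b k ∧ b k ≤ 1) ∧ 0 < γ k := by
    intro k
    induction k with
    | zero => exact ⟨⟨ha₀.1, ha₀.2⟩, ⟨hb₀.1, hb₀.2⟩, by rw [hγ₀]; exact hγpos⟩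
    | succ k ih =>
      obtain ⟨he1, he2, hterm, hgo⟩ := hrun k
      by_cases H : abar (k+1) = a k ∧ bbar (k+1) = b k
      · obtain ⟨h1, h2, h3⟩ := hterm H
        rw [h1, h2, h3]; exact ih
      · obtain ⟨h1, h2, h3, h4⟩ := hgo H
        refine ⟨by rw [h1]; exact clamp_mem _, by rw [h2]; exact clamp_mem _, ?_⟩
        by_cases H2 : a (k+1) = a k ∧ b (k+1) = b k
        · obtain ⟨μ, hμ0, hμ1, hγ⟩ := h3 H2
          rw [hγ]; exact mul_pos hμ0 ih.2.2
        · rw [h4 H2]; exact ih.2.2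
  -- one-step contraction
  have step : ∀ k, |a (k+1) - (sr+1)/2| ≤ max 0 (|a k - (sr+1)/2| - η * mr) ∧
                   |b (k+1) - (sc+1)/2| ≤ max 0 (|b k - (sc+1)/2| - η * mc) := by
    intro k
    obtain ⟨⟨ha0, ha1⟩, ⟨hb0k, hb1k⟩, hγk⟩ := inv k
    obtain ⟨he1, he2, hterm, hgo⟩ := hrun k
    by_cases H : abar (k+1) = a k ∧ bbar (k+1) = b k
    · obtain ⟨h1, h2, -⟩ := hterm H
      have hA : |a k - (sr+1)/2| ≤ max 0 (|a k - (sr+1)/2| - γ k * mr) := by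
        have hc : γ k * mr ≤ sr * (γ k * dVr2 R (b k)) := by
          have := mul_le_mul_of_nonneg_left (hdr (b k) hb0k hb1k) hγk.le
          calc γ k * mr ≤ γ k * (sr * dVr2 R (b k)) := this
            _ = sr * (γ k * dVr2 R (b k)) := by ring
        have := clamp_step (a k) (γ k * dVr2 R (b k)) (γ k * mr) sr ha0 ha1
          (mul_pos hγk hmr) hsr hc
        rwa [← he1, H.1] at this
      have hA0 : a k = (sr+1)/2 := by
        have := dist_zero_of_contract (abs_nonneg _) (mul_pos hγk hmr) hA
        have := abs_eq_zero.mp this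
        linarith
      have hB : |b k - (sc+1)/2| ≤ max 0 (|b k - (sc+1)/2| - γ k * mc) := by
        have hc : γ k * mc ≤ sc * (γ k * dVc2 C (a k)) := by
          have := mul_le_mul_of_nonneg_left (hdc (a k) ha0 ha1) hγk.le
          calc γ k * mc ≤ γ k * (sc * dVc2 C (a k)) := this
            _ = sc * (γ k * dVc2 C (a k)) := by ring
        have := clamp_step (b k) (γ k * dVc2 C (a k)) (γ k * mc) sc hb0k hb1k
          (mul_pos hγk hmc) hsc hc
        rwa [← he2, H.2] at this
      have hB0 : b k = (sc+1)/2 := by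
        have := dist_zero_of_contract (abs_nonneg _) (mul_pos hγk hmc) hB
        have := abs_eq_zero.mp this
        linarith
      constructor
      · rw [h1, hA0, sub_self, abs_zero]; exact le_max_left _ _
      · rw [h2, hB0, sub_self, abs_zero]; exact le_max_left _ _
    · obtain ⟨h1, h2, -, -⟩ := hgo H
      have hbbar : 0 ≤ bbar (k+1) ∧ bbar (k+1) ≤ 1 := by
        rw [he2]; exact clamp_mem _
      have habar : 0 ≤ abar (k+1) ∧ abar (k+1) ≤ 1 := by
        rw [he1]; exact clamp_mem _
      constructor
      · rw [h1]
        refine clamp_step _ _ _ _ ha0 ha1 (mul_pos hηpos hmr) hsr ?_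
        have := mul_le_mul_of_nonneg_left (hdr (bbar (k+1)) hbbar.1 hbbar.2) hηpos.le
        calc η * mr ≤ η * (sr * dVr2 R (bbar (k+1))) := this
          _ = sr * (η * dVr2 R (bbar (k+1))) := by ring
      · rw [h2]
        refine clamp_step _ _ _ _ hb0k hb1k (mul_pos hηpos hmc) hsc ?_
        have := mul_le_mul_of_nonneg_left (hdc (abar (k+1)) habar.1 habar.2) hηpos.le
        calc η * mc ≤ η * (sc * dVc2 C (abar (k+1))) := this
          _ = sc * (η * dVc2 C (abar (k+1))) := by ring
  have hp0 : 0 ≤ (sr+1)/2 := by rcases hsr with h | h <;> rw [h] <;> norm_num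
  have hp1 : (sr+1)/2 ≤ 1 := by rcases hsr with h | h <;> rw [h] <;> norm_num
  have hq0 : 0 ≤ (sc+1)/2 := by rcases hsc with h | h <;> rw [h] <;> norm_num
  have hq1 : (sc+1)/2 ≤ 1 := by rcases hsc with h | h <;> rw [h] <;> norm_num
  have decA := decay_lemma (fun k => |a k - (sr+1)/2|) (η * mr) (mul_pos hηpos hmr)
    (by rw [abs_le]; constructor <;> [linarith [ha₀.1, hp1]; linarith [ha₀.2, hp0]])
    (fun k => (step k).1)
  have decB := decay_lemma (fun k => |b k - (sc+1)/2|) (η * mc) (mul_pos hηpos hmc)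
    (by rw [abs_le]; constructor <;> [linarith [hb₀.1, hq1]; linarith [hb₀.2, hq0]])
    (fun k => (step k).2)
  obtain ⟨N, hN⟩ := exists_nat_ge (1 / (η * mr))
  obtain ⟨M, hM⟩ := exists_nat_ge (1 / (η * mc))
  have hak : ∀ k ≥ max N M, a k = (sr+1)/2 := by
    intro k hk
    have hkN : (N : ℝ) ≤ k := Nat.cast_le.mpr (le_trans (le_max_left N M) hk)
    have h1 : (1:ℝ) ≤ (k:ℝ) * (η * mr) := by
      rw [div_le_iff₀ (mul_pos hηpos hmr)] at hN
      nlinarith [mul_le_mul_of_nonneg_right hkN (mul_pos hηpos hmr).le]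
    have := decA k
    rw [max_eq_left (by linarith)] at this
    have h2 : |a k - (sr+1)/2| = 0 := le_antisymm this (abs_nonneg _)
    have := abs_eq_zero.mp h2; linarith
  have hbk : ∀ k ≥ max N M, b k = (sc+1)/2 := by
    intro k hk
    have hkM : (M : ℝ) ≤ k := Nat.cast_le.mpr (le_trans (le_max_right N M) hk)
    have h1 : (1:ℝ) ≤ (k:ℝ) * (η * mc) := by
      rw [div_le_iff₀ (mul_pos hηpos hmc)] at hM
      nlinarith [mul_le_mul_of_nonneg_right hkM (mul_pos hηpos hmc).le]
    have := decB k
    rw [max_eq_left (by linarith)] at this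
    have h2 : |b k - (sc+1)/2| = 0 := le_antisymm this (abs_nonneg _)
    have := abs_eq_zero.mp h2; linarith
  refine ⟨(sr+1)/2, (sc+1)/2, ⟨⟨hp0, hp1⟩, ⟨hq0, hq1⟩, ?_, ?_⟩, ?_⟩
  · intro α' hα'
    have hdq := hdr ((sc+1)/2) hq0 hq1
    have hid := Vr2_diff R ((sr+1)/2) α' ((sc+1)/2)
    rcases hsr with h | h
    · rw [h] at hdq hid ⊢
      rw [one_mul] at hdq
      nlinarith [hα'.2, mul_nonneg (by linarith : (0:ℝ) ≤ dVr2 R ((sc+1)/2))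
        (by linarith [hα'.2] : (0:ℝ) ≤ (1+1)/2 - α')]
    · rw [h] at hdq hid ⊢
      nlinarith [hα'.1, mul_nonneg (by linarith : (0:ℝ) ≤ -dVr2 R ((sc+1)/2))
        (by linarith [hα'.1] : (0:ℝ) ≤ α' - (-1+1)/2)]
  · intro β' hβ'
    have hdp := hdc ((sr+1)/2) hp0 hp1
    have hid := Vc2_diff C ((sr+1)/2) ((sc+1)/2) β'
    rcases hsc with h | h
    · rw [h] at hdp hid ⊢
      rw [one_mul] at hdp
      nlinarith [hβ'.2, mul_nonneg (by linarith : (0:ℝ) ≤ dVc2 C ((sr+1)/2))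
        (by linarith [hβ'.2] : (0:ℝ) ≤ (1+1)/2 - β')]
    · rw [h] at hdp hid ⊢
      nlinarith [hβ'.1, mul_nonneg (by linarith : (0:ℝ) ≤ -dVc2 C ((sr+1)/2))
        (by linarith [hβ'.1] : (0:ℝ) ≤ β' - (-1+1)/2)]
  · have hev : (fun _ : ℕ => ((sr+1)/2, (sc+1)/2)) =ᶠ[atTop]
        fun k => (a k, b k) :=
      Filter.eventually_atTop.mpr ⟨max N M, fun k hk => by simp only [hak k hk, hbk k hk]⟩
    exact Filter.Tendsto.congr' hev tendsto_const_nhds
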